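/- Let p be a prime, k a finite field of characteristic p, and let 𝒟 = a_0(z)δ^n + a_1(z)δ^{n−1} + ⋯ + a_n(z) ∈ k[z][δ] (with δ = z·d/dz) be a differential operator with polynomial coefficients of degree deg a_i ≤ d for all i, such that 𝒟 is fuchsian, zero is a regular singular point of 𝒟, and all exponents of 𝒟 at zero are equal to zero. If f ∈ k[[z]] is a nonzero power-series solution of 𝒟 (i.e. Σ_{i=0}^{n} a_i(z)·δ^{n−i}f = 0, where δf = z·f′), then there exist a nonzero polynomial P ∈ k[z] of degree at most pd − 1 and a formal Laurent series c ∈ k((z)) such that f(z) = P(z)·c(z^p). -/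

import Mathlib

/-- Stirling numbers of the second kind, satisfying
`δ^j = ∑_m stirling j m · z^m (d/dz)^m` for `δ = z d/dz`. -/
def stirling : ℕ → ℕ → ℕ
  | 0, 0 => 1
  | 0, _ + 1 => 0
  | _ + 1, 0 => 0
  | n + 1, m + 1 => (m + 1) * stirling n (m + 1) + stirling n m

/-- The Euler operator `δ = z d/dz` on formal power series. -/
noncomputable def deltaPS {R : Type*} [Semiring R] (f : PowerSeries R) : PowerSeries R :=
  PowerSeries.mk fun n => (n : R) * PowerSeries.coeff n f

/-- Substitution of `z^q` for `z` in a formal power series. -/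
noncomputable def expandPS {R : Type*} [Semiring R] (q : ℕ) (f : PowerSeries R) :
    PowerSeries R :=
  PowerSeries.mk fun n => if q ∣ n then PowerSeries.coeff (n / q) f else 0

/-- For `𝒟 = ∑_{i=0}^{n} a i · δ^{n-i}` with polynomial coefficients, the coefficient of
`(d/dz)^{n-i}` in the associated monic operator `L = (1/(z^n a 0)) ∑_m g_m (d/dz)^m`, where
`g_m = z^m ∑_j a j · stirling (n-j) m`. -/
noncomputable def monicCoeff {k : Type*} [Field k] (n : ℕ) (a : ℕ → Polynomial k) (i : ℕ) :
    RatFunc k :=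
  algebraMap (Polynomial k) (RatFunc k)
      (Polynomial.X ^ (n - i) *
        ∑ j ∈ Finset.range (n + 1), a j * Polynomial.C ((stirling (n - j) (n - i) : k))) /
    algebraMap (Polynomial k) (RatFunc k) (Polynomial.X ^ n * a 0)

namespace Stmt5Aux
open PowerSeries Polynomial Finset Matrix

variable {k : Type} [Field k] {p : ℕ}

/-- section extraction: coefficients `p*j + r`. -/
noncomputable def sec (p r : ℕ) (h : PowerSeries k) : PowerSeries k :=
  PowerSeries.mk fun j => PowerSeries.coeff (p*j + r) h

@[simp] lemma coeff_sec (r j : ℕ) (h : PowerSeries k) :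
    PowerSeries.coeff j (sec p r h) = PowerSeries.coeff (p*j+r) h :=
  PowerSeries.coeff_mk _ _

lemma sec_sum {ι : Type*} (s : Finset ι) (F : ι → PowerSeries k) (r : ℕ) :
    sec p r (∑ i ∈ s, F i) = ∑ i ∈ s, sec p r (F i) := by
  ext j
  simp [coeff_sec, map_sum]

@[simp] lemma coeff_expandPS (q N : ℕ) (c : PowerSeries k) :
    PowerSeries.coeff N (expandPS q c) =
      if q ∣ N then PowerSeries.coeff (N/q) c else 0 :=
  PowerSeries.coeff_mk _ _

lemma expandPS_mul (hp : 0 < p) (x y : PowerSeries k) :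
    expandPS p (x * y) = expandPS p x * expandPS p y := by
  ext N
  rw [PowerSeries.coeff_mul, coeff_expandPS]
  by_cases hN : p ∣ N
  · obtain ⟨M, rfl⟩ := hN
    rw [if_pos (dvd_mul_right p M), PowerSeries.coeff_mul,
      Nat.mul_div_cancel_left M hp]
    have himg : (Finset.HasAntidiagonal.antidiagonal M).image (fun ab => (p*ab.1, p*ab.2)) ⊆
        Finset.HasAntidiagonal.antidiagonal (p*M) := by
      intro x hx
      simp only [Finset.mem_image, Finset.HasAntidiagonal.mem_antidiagonal] at hx ⊢
      obtain ⟨⟨a,b⟩, hab, rfl⟩ := hx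
      simp only [Finset.HasAntidiagonal.mem_antidiagonal] at hab
      simp only [← Nat.mul_add, hab]
    have hzero : ∀ q ∈ Finset.HasAntidiagonal.antidiagonal (p*M),
        q ∉ (Finset.HasAntidiagonal.antidiagonal M).image (fun ab => (p*ab.1, p*ab.2)) →
        (PowerSeries.coeff q.1) (expandPS p x) *
          (PowerSeries.coeff q.2) (expandPS p y) = 0 := by
      rintro ⟨i,j⟩ hij hnot
      simp only [coeff_expandPS]
      by_cases hi : p ∣ i
      · by_cases hj : p ∣ j
        · exfalso
          apply hnot
          simp only [Finset.mem_image, Finset.HasAntidiagonal.mem_antidiagonal, Prod.ext_iff]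
          refine ⟨(i/p, j/p), ?_, ?_, ?_⟩
          · rw [Finset.HasAntidiagonal.mem_antidiagonal] at hij
            have h2 : p * (i/p) + p * (j/p) = p * M := by
              rw [Nat.mul_div_cancel' hi, Nat.mul_div_cancel' hj]; exact hij
            refine Nat.eq_of_mul_eq_mul_left hp ?_
            show p * ((i/p) + (j/p)) = p * M
            rw [Nat.mul_add]; exact h2
          · exact Nat.mul_div_cancel' hi
          · exact Nat.mul_div_cancel' hj
        · rw [if_neg hj, mul_zero]
      · rw [if_neg hi, zero_mul]
    rw [← Finset.sum_subset himg hzero]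
    rw [Finset.sum_image (by
      rintro ⟨a,b⟩ _ ⟨a',b'⟩ _ h
      simp only [Prod.ext_iff] at h ⊢
      exact ⟨Nat.eq_of_mul_eq_mul_left hp h.1, Nat.eq_of_mul_eq_mul_left hp h.2⟩)]
    apply Finset.sum_congr rfl
    rintro ⟨a,b⟩ _
    simp [coeff_expandPS, Nat.mul_div_cancel_left _ hp]
  · rw [if_neg hN]
    symm
    apply Finset.sum_eq_zero
    rintro ⟨i,j⟩ hij
    rw [Finset.HasAntidiagonal.mem_antidiagonal] at hij
    simp only [coeff_expandPS]
    by_cases hi : p ∣ i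
    · by_cases hj : p ∣ j
      · exact absurd (hij ▸ Nat.dvd_add hi hj) hN
      · rw [if_neg hj, mul_zero]
    · rw [if_neg hi, zero_mul]


/-- polynomial section -/
noncomputable def psec (p s : ℕ) (a : Polynomial k) : Polynomial k :=
  ∑ q ∈ Finset.range (a.natDegree + 1), Polynomial.C (a.coeff (p*q+s)) * Polynomial.X ^ q

lemma coeff_psec (hp : 0 < p) (s : ℕ) (a : Polynomial k) (j : ℕ) :
    (psec p s a).coeff j = a.coeff (p*j+s) := by
  rw [psec, Polynomial.finset_sum_coeff]
  simp only [Polynomial.coeff_C_mul, Polynomial.coeff_X_pow, mul_ite, mul_one, mul_zero]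
  rw [Finset.sum_ite_eq (Finset.range (a.natDegree + 1)) j (fun q => a.coeff (p*q+s))]
  split_ifs with h
  · rfl
  · symm
    apply Polynomial.coeff_eq_zero_of_natDegree_lt
    rw [Finset.mem_range, not_lt] at h
    have : j ≤ p * j := Nat.le_mul_of_pos_left j hp
    omega

lemma expandPS_coe (hp : 0 < p) (q : Polynomial k) :
    ((Polynomial.expand k p q : Polynomial k) : PowerSeries k) =
      expandPS p (q : PowerSeries k) := by
  ext N
  rw [Polynomial.coeff_coe, Polynomial.coeff_expand hp, coeff_expandPS]
  split_ifs <;> simp [Polynomial.coeff_coe]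

lemma sec_X_pow_mul_expand (hp : 0 < p) {u : ℕ} (hu : u < p) (s : ℕ) (w : PowerSeries k) :
    sec p u (PowerSeries.X ^ s * expandPS p w) =
      if s % p = u then PowerSeries.X ^ (s / p) * w else 0 := by
  ext j
  rw [coeff_sec, PowerSeries.coeff_X_pow_mul']
  by_cases hs : s % p = u
  · rw [if_pos hs, PowerSeries.coeff_X_pow_mul']
    have hsd : p * (s / p) + u = s := by rw [← hs]; exact Nat.div_add_mod s p
    by_cases hq : s / p ≤ j
    · rw [if_pos hq]
      have h1 : s ≤ p * j + u := by
        have := Nat.mul_le_mul_left p hq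
        omega
      rw [if_pos h1]
      have h2 : p * j + u - s = p * (j - s / p) := by
        rw [Nat.mul_sub]
        omega
      rw [h2, coeff_expandPS, if_pos (Dvd.intro _ rfl), Nat.mul_div_cancel_left _ hp]
    · rw [if_neg hq, if_neg]
      intro hle
      apply hq
      have : p * (s/p) ≤ p * j := by omega
      exact Nat.le_of_mul_le_mul_left this hp
  · rw [if_neg hs]
    split_ifs with h1
    · rw [coeff_expandPS]
      split_ifs with h2
      · exfalso
        obtain ⟨t, ht⟩ := h2
        apply hs
        have hst : p * j + u = s + p * t := by omega
        have : (p * j + u) % p = (s + p * t) % p := by rw [hst]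
        rw [Nat.mul_add_mod, Nat.mod_eq_of_lt hu] at this
        rw [Nat.add_mul_mod_self_left] at this
        omega
      · simp
    · simp

lemma decomp (hp : 0 < p) (h : PowerSeries k) :
    h = ∑ r ∈ Finset.range p, PowerSeries.X ^ r * expandPS p (sec p r h) := by
  ext m
  have key : m - m % p = p * (m / p) :=
    Nat.sub_eq_of_eq_add (Nat.div_add_mod m p).symm
  rw [map_sum, Finset.sum_eq_single (m % p)]
  · rw [PowerSeries.coeff_X_pow_mul', if_pos (Nat.mod_le m p), coeff_expandPS,
      if_pos ⟨m / p, key⟩]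
    have h1 : (m - m % p) / p = m / p := by
      rw [key, Nat.mul_div_cancel_left _ hp]
    rw [h1, coeff_sec]
    exact congrFun (congrArg _ (congrArg _ (Nat.div_add_mod m p).symm)) _
  · intro r hr hne
    rw [PowerSeries.coeff_X_pow_mul']
    split_ifs with h1
    · rw [coeff_expandPS]
      split_ifs with h2
      · exfalso
        obtain ⟨t, ht⟩ := h2
        apply hne
        have hm : m = r + p * t := by omega
        rw [hm, Nat.add_mul_mod_self_left, Nat.mod_eq_of_lt (Finset.mem_range.mp hr)]
      · rfl
    · rfl
  · intro hm
    exact absurd (Finset.mem_range.mpr (Nat.mod_lt m hp)) hm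


lemma mod_helper (hp : 0 < p) {u r : ℕ} (hu : u < p) (hr : r < p) :
    ((u + p - r) % p) = if u < r then u + p - r else u - r := by
  split_ifs with h
  · exact Nat.mod_eq_of_lt (by omega)
  · rw [show u + p - r = (u - r) + p by omega, Nat.add_mod_right,
      Nat.mod_eq_of_lt (by omega)]

lemma uniq_helper (hp : 0 < p) {u r s : ℕ} (hu : u < p) (hr : r < p) (hs : s < p)
    (h : (s + r) % p = u) : s = (u + p - r) % p := by
  rw [mod_helper hp hu hr]
  have hd := Nat.div_add_mod (s + r) p
  rw [h] at hd
  set e := (s + r) / p with he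
  have h2 : e < 2 := by
    by_contra hc
    push_neg at hc
    have : p * 2 ≤ p * e := Nat.mul_le_mul_left p hc
    omega
  interval_cases e <;> split_ifs <;> omega

lemma sec_mul (hp : 0 < p) {u : ℕ} (hu : u < p) (g h : PowerSeries k) :
    sec p u (g * h) = ∑ r ∈ Finset.range p,
      PowerSeries.X ^ (if u < r then 1 else 0) *
        (sec p ((u + p - r) % p) g * sec p r h) := by
  have step : ∀ s ∈ Finset.range p, ∀ r ∈ Finset.range p,
      sec p u ((PowerSeries.X ^ s * expandPS p (sec p s g)) *
          (PowerSeries.X ^ r * expandPS p (sec p r h)))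
        = if (s + r) % p = u
            then PowerSeries.X ^ ((s + r) / p) * (sec p s g * sec p r h) else 0 := by
    intro s _ r _
    rw [show (PowerSeries.X ^ s * expandPS p (sec p s g)) *
          (PowerSeries.X ^ r * expandPS p (sec p r h))
        = PowerSeries.X ^ (s + r) *
          (expandPS p (sec p s g) * expandPS p (sec p r h)) by
        rw [pow_add]; ring,
      ← expandPS_mul hp, sec_X_pow_mul_expand hp hu]
  calc sec p u (g * h)
      = ∑ s ∈ Finset.range p, ∑ r ∈ Finset.range p,
          sec p u ((PowerSeries.X ^ s * expandPS p (sec p s g)) *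
            (PowerSeries.X ^ r * expandPS p (sec p r h))) := by
        conv_lhs => rw [decomp hp g, decomp hp h]
        rw [Finset.sum_mul_sum, sec_sum]
        exact Finset.sum_congr rfl fun s _ => sec_sum _ _ _
    _ = ∑ s ∈ Finset.range p, ∑ r ∈ Finset.range p,
          (if (s + r) % p = u
            then PowerSeries.X ^ ((s + r) / p) * (sec p s g * sec p r h) else 0) :=
        Finset.sum_congr rfl fun s hs => Finset.sum_congr rfl fun r hr => step s hs r hr
    _ = ∑ r ∈ Finset.range p, ∑ s ∈ Finset.range p,
          (if (s + r) % p = u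
            then PowerSeries.X ^ ((s + r) / p) * (sec p s g * sec p r h) else 0) :=
        Finset.sum_comm
    _ = ∑ r ∈ Finset.range p,
          PowerSeries.X ^ (if u < r then 1 else 0) *
            (sec p ((u + p - r) % p) g * sec p r h) := by
        apply Finset.sum_congr rfl
        intro r hr
        have hrp := Finset.mem_range.mp hr
        rw [Finset.sum_eq_single ((u + p - r) % p)]
        · rw [mod_helper hp hu hrp]
          split_ifs with hc h1 h1
          · congr 1
            rw [show u + p - r + r = u + p by omega, Nat.add_div_right _ hp,
              Nat.div_eq_of_lt hu]
          · exfalso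
            apply h1
            rw [show u + p - r + r = u + p by omega, Nat.add_mod_right,
              Nat.mod_eq_of_lt hu]
          · congr 1
            rw [show u - r + r = u by omega, Nat.div_eq_of_lt hu]
          · exfalso
            apply h1
            rw [show u - r + r = u by omega, Nat.mod_eq_of_lt hu]
        · intro s hs hsne
          rw [if_neg]
          intro hcon
          exact hsne (uniq_helper hp hu hrp (Finset.mem_range.mp hs) hcon)
        · intro hmem
          exact absurd (Finset.mem_range.mpr (Nat.mod_lt _ hp)) hmem

lemma sec_coe (hp : 0 < p) (s : ℕ) (a : Polynomial k) :
    sec p s (a : PowerSeries k) = ((psec p s a : Polynomial k) : PowerSeries k) := by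
  ext j
  rw [coeff_sec, Polynomial.coeff_coe, Polynomial.coeff_coe, coeff_psec hp]

lemma sec_deltaPS [CharP k p] (r : ℕ) (f : PowerSeries k) :
    sec p r (deltaPS f) = ((r : k)) • sec p r f := by
  ext j
  rw [_root_.map_smul, coeff_sec, coeff_sec, deltaPS, PowerSeries.coeff_mk, smul_eq_mul]
  congr 1
  push_cast
  rw [CharP.cast_eq_zero k p]
  ring

lemma sec_deltaPS_iter [CharP k p] (m r : ℕ) (f : PowerSeries k) :
    sec p r (deltaPS^[m] f) = ((r : k) ^ m) • sec p r f := by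
  induction m with
  | zero => simp
  | succ m ih =>
    rw [Function.iterate_succ_apply', sec_deltaPS r, ih, smul_smul, pow_succ, mul_comm]


lemma sec_zero_ps (r : ℕ) : sec p r (0 : PowerSeries k) = 0 := by
  ext j; simp [coeff_sec]

lemma system (hp0 : 0 < p) [CharP k p] (n : ℕ) (a : ℕ → Polynomial k) (f : PowerSeries k)
    (hsol : ∑ i ∈ Finset.range (n + 1), ((a i : PowerSeries k) * deltaPS^[n - i] f) = 0)
    {u : ℕ} (hu : u < p) :
    ∑ r ∈ Finset.range p,
      ((Polynomial.X ^ (if u < r then 1 else 0) *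
        ∑ i ∈ Finset.range (n+1), psec p ((u + p - r) % p) (a i) *
          Polynomial.C ((r : k) ^ (n - i)) : Polynomial k) : PowerSeries k) * sec p r f
      = 0 := by
  have h1 : ∑ i ∈ Finset.range (n+1),
      sec p u ((a i : PowerSeries k) * deltaPS^[n-i] f) = 0 := by
    rw [← sec_sum, hsol, sec_zero_ps]
  calc ∑ r ∈ Finset.range p,
      ((Polynomial.X ^ (if u < r then 1 else 0) *
        ∑ i ∈ Finset.range (n+1), psec p ((u + p - r) % p) (a i) *
          Polynomial.C ((r : k) ^ (n - i)) : Polynomial k) : PowerSeries k) * sec p r f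
      = ∑ r ∈ Finset.range p, ∑ i ∈ Finset.range (n+1),
          PowerSeries.X ^ (if u < r then 1 else 0) *
            (((psec p ((u + p - r) % p) (a i) : Polynomial k) : PowerSeries k) *
              (((r : k) ^ (n - i)) • sec p r f)) := by
        apply Finset.sum_congr rfl
        intro r _
        rw [Polynomial.coe_mul, Polynomial.coe_pow, Polynomial.coe_X]
        rw [show ((∑ i ∈ Finset.range (n+1), psec p ((u + p - r) % p) (a i) *
              Polynomial.C ((r : k) ^ (n - i)) : Polynomial k) : PowerSeries k)
            = ∑ i ∈ Finset.range (n+1),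
                ((psec p ((u + p - r) % p) (a i) : Polynomial k) : PowerSeries k) *
                  PowerSeries.C ((r : k) ^ (n - i)) from by
          rw [← Polynomial.coeToPowerSeries.ringHom_apply, map_sum]
          exact Finset.sum_congr rfl fun i _ => by
            rw [_root_.map_mul, Polynomial.coeToPowerSeries.ringHom_apply,
              Polynomial.coeToPowerSeries.ringHom_apply, Polynomial.coe_C]]
        rw [mul_assoc, Finset.sum_mul, Finset.mul_sum]
        exact Finset.sum_congr rfl fun i _ => by
          rw [PowerSeries.smul_eq_C_mul, mul_assoc]
    _ = ∑ i ∈ Finset.range (n+1), ∑ r ∈ Finset.range p,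
          PowerSeries.X ^ (if u < r then 1 else 0) *
            (((psec p ((u + p - r) % p) (a i) : Polynomial k) : PowerSeries k) *
              (((r : k) ^ (n - i)) • sec p r f)) := Finset.sum_comm
    _ = ∑ i ∈ Finset.range (n+1),
          sec p u ((a i : PowerSeries k) * deltaPS^[n-i] f) := by
        apply Finset.sum_congr rfl
        intro i _
        rw [sec_mul hp0 hu]
        exact Finset.sum_congr rfl fun r _ => by
          rw [sec_coe hp0, sec_deltaPS_iter]
    _ = 0 := h1


section Mat

variable [CharP k p] (hp : p.Prime) (n d : ℕ) (a : ℕ → Polynomial k)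

/-- the matrix of the mod-p system -/
noncomputable def Nmat (p : ℕ) (n : ℕ) (a : ℕ → Polynomial k) [NeZero p] :
    Matrix (Fin p) (Fin p) (Polynomial k) :=
  Matrix.of fun u r =>
    Polynomial.X ^ (if (u:ℕ) < (r:ℕ) then 1 else 0) *
      ∑ i ∈ Finset.range (n+1), psec p (((u:ℕ) + p - (r:ℕ)) % p) (a i) *
        Polynomial.C (((r:ℕ) : k) ^ (n - i))

variable [NeZero p]

lemma entry_bound (hp0 : 0 < p) (hdeg : ∀ i ≤ n, (a i).natDegree ≤ d)
    (u r : Fin p) (hne : Nmat p n a u r ≠ 0) :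
    p * (Nmat p n a u r).natDegree + (u:ℕ) ≤ d + (r:ℕ) := by
  set s := (((u:ℕ) + p - (r:ℕ)) % p) with hs
  set S := ∑ i ∈ Finset.range (n+1), psec p s (a i) *
      Polynomial.C (((r:ℕ) : k) ^ (n - i)) with hS
  have hSne : S ≠ 0 := by
    intro h
    apply hne
    show Polynomial.X ^ (if (u:ℕ) < (r:ℕ) then 1 else 0) * S = 0
    rw [h, mul_zero]
  -- degree bound on S
  have hdS : p * S.natDegree + s ≤ d := by
    have hc : S.coeff S.natDegree ≠ 0 := by
      rw [← Polynomial.leadingCoeff]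
      exact Polynomial.leadingCoeff_ne_zero.mpr hSne
    rw [hS, Polynomial.finset_sum_coeff] at hc
    obtain ⟨i, hi, hine⟩ := Finset.exists_ne_zero_of_sum_ne_zero hc
    rw [Polynomial.coeff_mul_C] at hine
    have h2 : (psec p s (a i)).coeff S.natDegree ≠ 0 := fun h => hine (by rw [h, zero_mul])
    rw [coeff_psec hp0] at h2
    have h3 := Polynomial.le_natDegree_of_ne_zero h2
    have h4 := hdeg i (by
      have := Finset.mem_range.mp hi
      omega)
    omega
  -- now assemble
  have hXne : (Polynomial.X ^ (if (u:ℕ) < (r:ℕ) then 1 else 0) : Polynomial k) ≠ 0 :=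
    pow_ne_zero _ Polynomial.X_ne_zero
  have hnd : (Nmat p n a u r).natDegree
      = (if (u:ℕ) < (r:ℕ) then 1 else 0) + S.natDegree := by
    show (Polynomial.X ^ (if (u:ℕ) < (r:ℕ) then 1 else 0) * S).natDegree = _
    rw [Polynomial.natDegree_mul hXne hSne, Polynomial.natDegree_X_pow]
  have hsval : s = if (u:ℕ) < (r:ℕ) then (u:ℕ) + p - (r:ℕ) else (u:ℕ) - (r:ℕ) :=
    mod_helper hp0 u.isLt r.isLt
  rw [hnd]
  split_ifs at hsval ⊢ with h
  · rw [hsval] at hdS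
    have hr := r.isLt
    have hu := u.isLt
    rw [Nat.mul_add]
    omega
  · rw [hsval] at hdS
    rw [Nat.mul_add]
    omega

lemma term_bound (hp0 : 0 < p) (hdeg : ∀ i ≤ n, (a i).natDegree ≤ d)
    (r : Fin p) (σ : Equiv.Perm (Fin p))
    (hne : (∏ i, ((Nmat p n a).updateRow 0 (Pi.single r 1)) (σ i) i) ≠ 0) :
    p * (∏ i, ((Nmat p n a).updateRow 0 (Pi.single r 1)) (σ i) i).natDegree + (r:ℕ)
      ≤ (p-1) * d := by
  set U := (Nmat p n a).updateRow 0 (Pi.single r 1) with hU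
  have hfac : ∀ i : Fin p, U (σ i) i ≠ 0 := by
    intro i
    exact Finset.prod_ne_zero_iff.mp hne i (Finset.mem_univ i)
  have hσr : σ r = 0 := by
    have h1 := hfac (σ.symm 0)
    rw [hU, Equiv.apply_symm_apply, Matrix.updateRow_self] at h1
    by_contra hcon
    have h2 : σ.symm 0 ≠ r := fun h => hcon (by rw [← h, Equiv.apply_symm_apply])
    rw [Pi.single_eq_of_ne (Ne.symm (fun h => h2 h.symm))] at h1
    exact h1 rfl
  have hprod : (∏ i, U (σ i) i) = ∏ i ∈ Finset.univ.erase r, U (σ i) i := by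
    rw [← Finset.mul_prod_erase Finset.univ _ (Finset.mem_univ r), hσr]
    rw [hU, Matrix.updateRow_self, Pi.single_eq_same, one_mul]
  have hsum : ∀ i ∈ Finset.univ.erase r,
      p * (U (σ i) i).natDegree + ((σ i : Fin p):ℕ) ≤ d + (i:ℕ) := by
    intro i hi
    have hir : i ≠ r := Finset.ne_of_mem_erase hi
    have hσi : σ i ≠ 0 := fun h => hir (by
      have := σ.injective (h.trans hσr.symm)
      exact this)
    have hUi : U (σ i) i = Nmat p n a (σ i) i := by
      rw [hU, Matrix.updateRow_ne hσi]
    apply le_trans _ (entry_bound n d a hp0 hdeg (σ i) i (by rw [← hUi]; exact hfac i))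
    rw [hUi]
  -- sum the inequalities
  have hsum2 : ∑ i ∈ Finset.univ.erase r, (p * (U (σ i) i).natDegree + ((σ i : Fin p):ℕ))
      ≤ ∑ i ∈ Finset.univ.erase r, (d + (i:ℕ)) := Finset.sum_le_sum hsum
  rw [Finset.sum_add_distrib, Finset.sum_add_distrib, ← Finset.mul_sum,
    Finset.sum_const, Finset.card_erase_of_mem (Finset.mem_univ r), smul_eq_mul] at hsum2
  have hcard : (Finset.univ : Finset (Fin p)).card = p := by simp
  -- sums of indices
  have hperm : ∑ i ∈ Finset.univ, ((σ i : Fin p):ℕ) = ∑ i : Fin p, (i:ℕ) :=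
    Equiv.sum_comp σ (fun i => (i:ℕ))
  have hsplit1 : ((σ r : Fin p):ℕ) + ∑ i ∈ Finset.univ.erase r, ((σ i : Fin p):ℕ)
      = ∑ i ∈ Finset.univ, ((σ i : Fin p):ℕ) :=
    Finset.add_sum_erase Finset.univ (fun i => ((σ i : Fin p):ℕ)) (Finset.mem_univ r)
  have hsplit2 : ((r : Fin p):ℕ) + ∑ i ∈ Finset.univ.erase r, ((i : Fin p):ℕ)
      = ∑ i : Fin p, (i:ℕ) :=
    Finset.add_sum_erase Finset.univ (fun i => ((i : Fin p):ℕ)) (Finset.mem_univ r)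
  rw [hσr] at hsplit1
  have h0 : ((0 : Fin p):ℕ) = 0 := rfl
  rw [h0, zero_add] at hsplit1
  -- conclude Σ_{erase} deg bound
  have hdeg2 : p * (∏ i, U (σ i) i).natDegree
      ≤ p * ∑ i ∈ Finset.univ.erase r, (U (σ i) i).natDegree := by
    apply Nat.mul_le_mul_left
    rw [hprod]
    exact Polynomial.natDegree_prod_le _ _
  rw [hcard] at hsum2
  omega

lemma smul_natDegree_eq (z : ℤˣ) (q : Polynomial k) : (z • q).natDegree = q.natDegree := by
  rcases Int.units_eq_one_or z with h | h <;> subst h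
  · rw [one_smul]
  · rw [Units.smul_def, Units.val_neg, Units.val_one, neg_smul, one_smul,
      Polynomial.natDegree_neg]

lemma adj_term_deg (hp0 : 0 < p) (hdeg : ∀ i ≤ n, (a i).natDegree ≤ d) (r : Fin p) :
    (Polynomial.X ^ (r:ℕ) *
      Polynomial.expand k p ((Nmat p n a).adjugate r 0)).natDegree ≤ p * d - 1 := by
  have hw : (Nmat p n a).adjugate r 0
      = ((Nmat p n a).updateRow 0 (Pi.single r 1)).det := Matrix.adjugate_apply _ r 0
  by_cases hA : (r:ℕ) ≤ (p-1)*d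
  · have hwdeg : ((Nmat p n a).adjugate r 0).natDegree ≤ ((p-1)*d - (r:ℕ))/p := by
      rw [hw, Matrix.det_apply]
      apply Polynomial.natDegree_sum_le_of_forall_le
      intro σ _
      rw [smul_natDegree_eq]
      by_cases hz : (∏ i, ((Nmat p n a).updateRow 0 (Pi.single r 1)) (σ i) i) = 0
      · rw [hz, Polynomial.natDegree_zero]
        exact Nat.zero_le _
      · have hb := term_bound n d a hp0 hdeg r σ hz
        rw [Nat.le_div_iff_mul_le hp0, mul_comm]
        omega
    have h2 : (p-1)*d ≤ p*d - 1 := by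
      rcases Nat.eq_zero_or_pos d with hd | hd
      · subst hd; simp
      · have he : (p-1)*d = p*d - 1*d := by rw [Nat.sub_mul]
        have hpd : 1*d ≤ p*d := Nat.mul_le_mul_right d hp0
        rw [one_mul] at he hpd
        omega
    have h1 : ((p-1)*d - (r:ℕ))/p * p ≤ (p-1)*d - (r:ℕ) := Nat.div_mul_le_self _ _
    calc (Polynomial.X ^ (r:ℕ) *
          Polynomial.expand k p ((Nmat p n a).adjugate r 0)).natDegree
        ≤ (Polynomial.X ^ (r:ℕ) : Polynomial k).natDegree +
            (Polynomial.expand k p ((Nmat p n a).adjugate r 0)).natDegree :=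
          Polynomial.natDegree_mul_le
      _ ≤ (r:ℕ) + ((p-1)*d - (r:ℕ))/p * p := by
          rw [Polynomial.natDegree_X_pow, Polynomial.natDegree_expand]
          exact Nat.add_le_add_left (Nat.mul_le_mul_right p hwdeg) _
      _ ≤ p*d - 1 := by omega
  · have hw0 : (Nmat p n a).adjugate r 0 = 0 := by
      rw [hw, Matrix.det_apply]
      apply Finset.sum_eq_zero
      intro σ _
      have hz : (∏ i, ((Nmat p n a).updateRow 0 (Pi.single r 1)) (σ i) i) = 0 := by
        by_contra hz
        have hb := term_bound n d a hp0 hdeg r σ hz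
        omega
      rw [hz, smul_zero]
    rw [hw0, map_zero, mul_zero, Polynomial.natDegree_zero]
    exact Nat.zero_le _

lemma det_coeff_zero_ne (hp : p.Prime) (h00 : (a 0).eval 0 ≠ 0)
    (h0 : ∀ i, 1 ≤ i → i ≤ n → (a i).eval 0 = 0) :
    (((Nmat p n a).updateRow 0 (Pi.single 0 1)).det).coeff 0 ≠ 0 := by
  have hp0 : 0 < p := hp.pos
  rw [Polynomial.coeff_zero_eq_eval_zero]
  have hmap : Polynomial.eval 0 (((Nmat p n a).updateRow 0 (Pi.single 0 1)).det)
      = (((Nmat p n a).updateRow 0 (Pi.single 0 1)).map (Polynomial.evalRingHom 0)).det := by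
    have h := RingHom.map_det (Polynomial.evalRingHom 0)
      ((Nmat p n a).updateRow 0 (Pi.single 0 1))
    rw [RingHom.mapMatrix_apply] at h
    simpa using h
  rw [hmap]
  set B := ((Nmat p n a).updateRow 0 (Pi.single 0 1)).map (Polynomial.evalRingHom 0) with hB
  have htri : B.BlockTriangular OrderDual.toDual := by
    intro i j hij
    have hij' : i < j := hij
    rw [hB, Matrix.map_apply]
    by_cases hi : i = 0
    · subst hi
      rw [Matrix.updateRow_self, Pi.single_eq_of_ne (by
        intro h; subst h; exact absurd hij' (lt_irrefl _)), _root_.map_zero]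
    · rw [Matrix.updateRow_ne hi]
      simp only [Nmat, Matrix.of_apply]
      rw [if_pos ((Fin.lt_def).mp hij'), pow_one, Polynomial.coe_evalRingHom,
        Polynomial.eval_mul, Polynomial.eval_X, zero_mul]
  rw [Matrix.det_of_lowerTriangular B htri]
  have hdiag : ∀ u : Fin p, B u u
      = if u = 0 then 1 else (a 0).eval 0 * (((u:ℕ) : k))^n := by
    intro u
    rw [hB, Matrix.map_apply]
    by_cases hu : u = 0
    · subst hu
      rw [if_pos rfl, Matrix.updateRow_self, Pi.single_eq_same, _root_.map_one]
    · rw [if_neg hu, Matrix.updateRow_ne hu]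
      simp only [Nmat, Matrix.of_apply]
      rw [if_neg (lt_irrefl _), pow_zero, one_mul, Polynomial.coe_evalRingHom]
      have hs : ((u:ℕ) + p - (u:ℕ)) % p = 0 := by
        rw [Nat.add_sub_cancel_left, Nat.mod_self]
      rw [hs, Polynomial.eval_finset_sum]
      rw [Finset.sum_eq_single_of_mem 0 (Finset.mem_range.mpr (by omega))]
      · rw [Polynomial.eval_mul, Polynomial.eval_C, Nat.sub_zero,
          ← Polynomial.coeff_zero_eq_eval_zero, coeff_psec hp0, Nat.mul_zero, Nat.add_zero,
          Polynomial.coeff_zero_eq_eval_zero]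
      · intro i hi hine
        rw [Polynomial.eval_mul, ← Polynomial.coeff_zero_eq_eval_zero, coeff_psec hp0,
          Nat.mul_zero, Nat.add_zero, Polynomial.coeff_zero_eq_eval_zero,
          h0 i (by omega) (by have := Finset.mem_range.mp hi; omega), zero_mul]
  rw [Finset.prod_congr rfl (fun u _ => hdiag u)]
  rw [Finset.prod_ne_zero_iff]
  intro u _
  by_cases hu : u = 0
  · subst hu; rw [if_pos rfl]; exact one_ne_zero
  · rw [if_neg hu]
    apply mul_ne_zero h00
    apply pow_ne_zero
    intro hc
    rw [CharP.cast_eq_zero_iff k p] at hc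
    have h1 : (u:ℕ) ≠ 0 := fun h => hu (Fin.ext h)
    have h2 := Nat.le_of_dvd (Nat.pos_of_ne_zero h1) hc
    have := u.isLt
    omega

end Mat

end Stmt5Aux

set_option maxHeartbeats 1000000 in
/-- Let `k` be a finite field of characteristic `p` and
`𝒟 = a 0 · δ^n + a 1 · δ^{n-1} + ⋯ + a n ∈ k[z][δ]` with `deg (a i) ≤ d`, such that `𝒟` is
fuchsian, zero is a regular singular point of `𝒟` and all exponents of `𝒟` at zero equal
zero (equivalently `a 0 (0) ≠ 0` and `a i (0) = 0` for `1 ≤ i ≤ n`).  If `f ∈ k[[z]]` is a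
nonzero solution of `𝒟`, then `f(z) = P(z) · c(z^p)` for some nonzero polynomial `P` of
degree at most `p d − 1` and some `c ∈ k((z))` (written `c = z^{-m} c'` with `c' ∈ k[[z]]`). -/
theorem stmt5 (p : ℕ) (hp : p.Prime) (k : Type) [Field k] [Fintype k] [CharP k p]
    (n d : ℕ) (a : ℕ → Polynomial k)
    (hdeg : ∀ i ≤ n, (a i).natDegree ≤ d)
    -- zero is a regular singular point of 𝒟 with all exponents at zero equal to zero
    (h00 : (a 0).eval 0 ≠ 0)
    (h0 : ∀ i, 1 ≤ i → i ≤ n → (a i).eval 0 = 0)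
    -- 𝒟 is fuchsian: infinity is a regular singular point of the monic form …
    (hinfty : ∀ i, 1 ≤ i → i ≤ n →
      (RatFunc.num (monicCoeff n a i)).degree + (i : WithBot ℕ) ≤
        (RatFunc.denom (monicCoeff n a i)).degree)
    -- … and every finite singular point (in the algebraic closure) is regular singular
    (hreg : ∀ α : AlgebraicClosure k,
      (∃ i, 1 ≤ i ∧ i ≤ n ∧
        Polynomial.eval α
          ((RatFunc.denom (monicCoeff n a i)).map (algebraMap k (AlgebraicClosure k))) = 0) →
      ∀ i, 1 ≤ i → i ≤ n →
        ¬ ((Polynomial.X - Polynomial.C α) ^ (i + 1) ∣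
            (RatFunc.denom (monicCoeff n a i)).map (algebraMap k (AlgebraicClosure k))))
    -- f is a nonzero power-series solution of 𝒟
    (f : PowerSeries k) (hf : f ≠ 0)
    (hsol : ∑ i ∈ Finset.range (n + 1), ((a i : PowerSeries k) * deltaPS^[n - i] f) = 0) :
    ∃ P : Polynomial k, P ≠ 0 ∧ P.natDegree ≤ p * d - 1 ∧
      ∃ (c : PowerSeries k) (m : ℕ),
        PowerSeries.X ^ (p * m) * f = (P : PowerSeries k) * expandPS p c := by
  classical
  have hp0 : 0 < p := hp.pos
  haveI : NeZero p := ⟨hp.ne_zero⟩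
  set Nm := Stmt5Aux.Nmat p n a (k := k) with hNm
  set W : Fin p → PowerSeries k :=
    fun r => ((Nm.adjugate r 0 : Polynomial k) : PowerSeries k) with hW
  set F : Fin p → PowerSeries k := fun r => Stmt5Aux.sec p (r:ℕ) f with hF
  -- the linear system
  have sysF : ∀ u : Fin p, ∑ r : Fin p,
      ((Nm u r : Polynomial k) : PowerSeries k) * F r = 0 := by
    intro u
    have h := Stmt5Aux.system hp0 n a f hsol u.isLt
    rw [← Fin.sum_univ_eq_sum_range (fun r =>
      ((Polynomial.X ^ (if (u:ℕ) < r then 1 else 0) *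
        ∑ i ∈ Finset.range (n+1), Stmt5Aux.psec p (((u:ℕ) + p - r) % p) (a i) *
          Polynomial.C ((r : k) ^ (n - i)) : Polynomial k) : PowerSeries k) *
        Stmt5Aux.sec p r f) p] at h
    exact h
  -- adjugate relation
  have adj0 : ∀ u : Fin p, u ≠ 0 →
      ∑ r : Fin p, ((Nm u r : Polynomial k) : PowerSeries k) * W r = 0 := by
    intro u hu
    have h := Matrix.mul_adjugate Nm
    have h2 := congrFun (congrFun h u) 0
    rw [Matrix.mul_apply, Matrix.smul_apply, Matrix.one_apply_ne hu, smul_zero] at h2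
    have h3 := congrArg (Polynomial.coeToPowerSeries.ringHom (R := k)) h2
    rw [map_sum, map_zero] at h3
    rw [← h3]
    apply Finset.sum_congr rfl
    intro r _
    rw [_root_.map_mul]
    rfl
  set TN := Nm.updateRow 0 (Pi.single 0 1) with hTN
  have hdet0 : (TN.det).coeff 0 ≠ 0 := Stmt5Aux.det_coeff_zero_ne n a hp h00 h0
  set T := (Nm.map (Polynomial.coeToPowerSeries.ringHom (R := k))).updateRow 0
    (Pi.single 0 1) with hT
  have hTmap : T = TN.map (Polynomial.coeToPowerSeries.ringHom (R := k)) := by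
    apply Matrix.ext
    intro i j
    by_cases hi : i = 0
    · subst hi
      rw [hT, hTN, Matrix.map_apply, Matrix.updateRow_self, Matrix.updateRow_self]
      by_cases hj : j = 0
      · subst hj
        rw [Pi.single_eq_same, Pi.single_eq_same, _root_.map_one]
      · rw [Pi.single_eq_of_ne hj, Pi.single_eq_of_ne hj, _root_.map_zero]
    · rw [hT, hTN, Matrix.map_apply, Matrix.updateRow_ne hi, Matrix.updateRow_ne hi,
        Matrix.map_apply]
  have hdetT : IsUnit T.det := by
    have hdet : T.det = ((TN.det : Polynomial k) : PowerSeries k) := by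
      rw [hTmap]
      have h := RingHom.map_det (Polynomial.coeToPowerSeries.ringHom (R := k)) TN
      rw [RingHom.mapMatrix_apply] at h
      rw [← h]
      rfl
    rw [hdet, PowerSeries.isUnit_iff_constantCoeff, Polynomial.constantCoeff_coe]
    exact isUnit_iff_ne_zero.mpr hdet0
  -- kill the residual vector
  set v : Fin p → PowerSeries k := fun r => W 0 * F r - W r * F 0 with hv
  have hTv : T.mulVec v = 0 := by
    funext u
    rw [Pi.zero_apply]
    simp only [Matrix.mulVec, dotProduct]
    by_cases hu : u = 0
    · subst hu
      rw [Finset.sum_eq_single (0 : Fin p)]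
      · have hv0 : v 0 = 0 := sub_self _
        rw [hv0, mul_zero]
      · intro b _ hb
        have hTb : T 0 b
            = (Pi.single (0 : Fin p) (1 : PowerSeries k) : Fin p → PowerSeries k) b := by
          rw [hT]
          exact congrFun (Matrix.updateRow_self) b
        rw [hTb, Pi.single_eq_of_ne hb, zero_mul]
      · intro hmem
        exact absurd (Finset.mem_univ _) hmem
    · have hTu : ∀ r, T u r = ((Nm u r : Polynomial k) : PowerSeries k) := by
        intro r
        rw [hT, Matrix.updateRow_ne hu, Matrix.map_apply]
        rfl
    -- rewrite and split
      calc ∑ r, T u r * v r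
          = ∑ r : Fin p, (((Nm u r : Polynomial k) : PowerSeries k) * (W 0 * F r)
              - ((Nm u r : Polynomial k) : PowerSeries k) * (W r * F 0)) := by
            apply Finset.sum_congr rfl
            intro r _
            rw [hTu r, hv, mul_sub]
        _ = W 0 * (∑ r : Fin p, ((Nm u r : Polynomial k) : PowerSeries k) * F r)
            - (∑ r : Fin p, ((Nm u r : Polynomial k) : PowerSeries k) * W r) * F 0 := by
            rw [Finset.sum_sub_distrib, Finset.mul_sum, Finset.sum_mul]
            congr 1
            · exact Finset.sum_congr rfl fun r _ => by ring
            · exact Finset.sum_congr rfl fun r _ => by ring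
        _ = 0 := by rw [sysF u, adj0 u hu, mul_zero, zero_mul, sub_zero]
  have hveq : v = 0 := by
    have h1 : T⁻¹ * T = 1 := Matrix.nonsing_inv_mul T hdetT
    calc v = (1 : Matrix (Fin p) (Fin p) (PowerSeries k)).mulVec v :=
          (Matrix.one_mulVec v).symm
      _ = (T⁻¹ * T).mulVec v := by rw [h1]
      _ = T⁻¹.mulVec (T.mulVec v) := by rw [← Matrix.mulVec_mulVec]
      _ = 0 := by rw [hTv, Matrix.mulVec_zero]
  -- invert W 0
  have hadj00 : Nm.adjugate 0 0 = TN.det := by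
    rw [hTN]
    exact Matrix.adjugate_apply Nm 0 0
  have hW0 : W 0 = ((TN.det : Polynomial k) : PowerSeries k) := by
    show ((Nm.adjugate 0 0 : Polynomial k) : PowerSeries k) = _
    rw [hadj00]
  have hW0c : PowerSeries.constantCoeff (W 0) ≠ 0 := by
    rw [hW0, Polynomial.constantCoeff_coe]
    exact hdet0
  have hW0inv : W 0 * (W 0)⁻¹ = 1 := PowerSeries.mul_inv_cancel _ hW0c
  have hFr : ∀ r : Fin p, F r = W r * (F 0 * (W 0)⁻¹) := by
    intro r
    have hkey : W 0 * F r = W r * F 0 := sub_eq_zero.mp (congrFun hveq r)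
    calc F r = (W 0 * (W 0)⁻¹) * F r := by rw [hW0inv, one_mul]
      _ = (W 0 * F r) * (W 0)⁻¹ := by ring
      _ = (W r * F 0) * (W 0)⁻¹ := by rw [hkey]
      _ = W r * (F 0 * (W 0)⁻¹) := by ring
  refine ⟨∑ r : Fin p, Polynomial.X ^ (r:ℕ) * Polynomial.expand k p (Nm.adjugate r 0),
    ?_, ?_, F 0 * (W 0)⁻¹, 0, ?_⟩
  · -- nonzero
    intro hP
    apply hdet0
    have hc0 := congrArg (fun q : Polynomial k => q.coeff 0) hP
    simp only [Polynomial.coeff_zero] at hc0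
    rw [Polynomial.finset_sum_coeff, Finset.sum_eq_single (0 : Fin p)] at hc0
    · rw [Polynomial.mul_coeff_zero, Polynomial.coeff_X_pow] at hc0
      rw [if_pos (by rw [Fin.val_zero]), one_mul, Polynomial.coeff_expand hp0,
        if_pos (dvd_zero p), Nat.zero_div, hadj00] at hc0
      exact hc0
    · intro b _ hb
      rw [Polynomial.mul_coeff_zero, Polynomial.coeff_X_pow, if_neg (by
        intro h
        apply hb
        apply Fin.ext
        rw [Fin.val_zero]
        omega), zero_mul]
    · intro hmem
      exact absurd (Finset.mem_univ _) hmem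
  · -- degree bound
    apply Polynomial.natDegree_sum_le_of_forall_le
    intro r _
    exact Stmt5Aux.adj_term_deg n d a hp0 hdeg r
  · -- the identity
    rw [Nat.mul_zero, pow_zero, one_mul]
    have hPcoe : ((∑ r : Fin p, Polynomial.X ^ (r:ℕ) *
          Polynomial.expand k p (Nm.adjugate r 0) : Polynomial k) : PowerSeries k)
        = ∑ r : Fin p, PowerSeries.X ^ (r:ℕ) * expandPS p (W r) := by
      rw [← Polynomial.coeToPowerSeries.ringHom_apply, map_sum]
      apply Finset.sum_congr rfl
      intro r _
      rw [_root_.map_mul, map_pow, Polynomial.coeToPowerSeries.ringHom_apply,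
        Polynomial.coeToPowerSeries.ringHom_apply, Polynomial.coe_X,
        Stmt5Aux.expandPS_coe hp0]
    rw [hPcoe]
    calc f = ∑ r ∈ Finset.range p, PowerSeries.X ^ r * expandPS p (Stmt5Aux.sec p r f) :=
          Stmt5Aux.decomp hp0 f
      _ = ∑ r : Fin p, PowerSeries.X ^ (r:ℕ) * expandPS p (F r) :=
          (Fin.sum_univ_eq_sum_range
            (fun r => PowerSeries.X ^ r * expandPS p (Stmt5Aux.sec p r f)) p).symm
      _ = ∑ r : Fin p, PowerSeries.X ^ (r:ℕ) *
            (expandPS p (W r) * expandPS p (F 0 * (W 0)⁻¹)) := by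
          apply Finset.sum_congr rfl
          intro r _
          rw [hFr r, Stmt5Aux.expandPS_mul hp0]
      _ = (∑ r : Fin p, PowerSeries.X ^ (r:ℕ) * expandPS p (W r)) *
            expandPS p (F 0 * (W 0)⁻¹) := by
          rw [Finset.sum_mul]
          exact Finset.sum_congr rfl fun r _ => (mul_assoc _ _ _).symm
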